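/- (Proposition 1.) Let r ≤ n ≤ N, let R ∈ (ℤ/2ℤ)^{n×r} have rank r, let t ∈ (ℤ/2ℤ)^n, c ∈ (ℤ/2ℤ)^n, let Q ∈ (ℤ/2ℤ)^{n×n} be symmetric, and define f(z) = Rz + t and ψ₀ = 2^{−r/2} Σ_{z ∈ (ℤ/2ℤ)^r} i^{2 c^⊤ f(z) + f(z)^⊤ Q f(z)} e_{f(z)} ∈ ℂ^{2^n} (exponents of i computed in ℤ from the {0,1} representatives). Let A ∈ (ℤ/2ℤ)^{N×n}. Then for every b ∈ (ℤ/2ℤ)^N, the sum Σ_{x : A u_x = b} |⟨ψ₀, e_{u_x}⟩|² (over x ∈ {0,…,2^n−1} with A u_x = b over ℤ/2ℤ) equals 2^{−rank(AR)} if b ∈ {A f(z) : z ∈ (ℤ/2ℤ)^r}, and equals 0 otherwise, where rank(AR) is the 𝔽₂-rank of AR. -/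

import Mathlib

open Matrix
open scoped InnerProductSpace Classical

lemma fiber_card {r N : ℕ} (M : Matrix (Fin N) (Fin r) (ZMod 2))
    (b : Fin N → ZMod 2) (z₀ : Fin r → ZMod 2) (h0 : M.mulVec z₀ = b) :
    (Finset.univ.filter (fun z : Fin r → ZMod 2 => M.mulVec z = b)).card
      = 2 ^ (r - M.rank) := by
  have hker : Fintype.card (LinearMap.ker M.mulVecLin) = 2 ^ (r - M.rank) := by
    have h1 := LinearMap.finrank_range_add_finrank_ker M.mulVecLin
    have h2 : Module.finrank (ZMod 2) (Fin r → ZMod 2) = r := by simp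
    have h3 : Module.finrank (ZMod 2) (LinearMap.ker M.mulVecLin) = r - M.rank := by
      rw [h2] at h1
      unfold Matrix.rank
      omega
    rw [Module.card_eq_pow_finrank (K := ZMod 2), h3, ZMod.card]
  rw [← hker, ← Fintype.card_subtype]
  apply Fintype.card_congr
  refine ⟨fun z => ⟨z.1 - z₀, ?_⟩, fun k => ⟨k.1 + z₀, ?_⟩, ?_, ?_⟩
  · have := z.2
    simp only [LinearMap.mem_ker, Matrix.mulVecLin_apply]
    rw [Matrix.mulVec_sub, this, h0, sub_self]
  · have := k.2
    simp only [LinearMap.mem_ker, Matrix.mulVecLin_apply] at this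
    simp only [Matrix.mulVec_add, this, h0, zero_add]
  · intro z; ext; simp
  · intro k; ext; simp

/-- Proposition 1: for the stabilizer state
`ψ₀ = 2^{-r/2} Σ_z i^{2 cᵀ f(z) + f(z)ᵀ Q f(z)} e_{f(z)}` with `f(z) = Rz + t`, `R` of
rank `r`, and any `A ∈ (ℤ/2ℤ)^{N×n}`, for every `b ∈ (ℤ/2ℤ)^N` the sum
`Σ_{x : A u_x = b} |⟨ψ₀, e_{u_x}⟩|²` (over bit strings `u ∈ (ℤ/2ℤ)^n` with `A u = b`)
equals `2^{-rank(AR)}` if `b ∈ {A f(z) : z}`, and `0` otherwise. -/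
theorem stmt5 (N n r : ℕ) (hrn : r ≤ n) (hnN : n ≤ N)
    (R : Matrix (Fin n) (Fin r) (ZMod 2)) (hR : R.rank = r)
    (t c : Fin n → ZMod 2) (Q : Matrix (Fin n) (Fin n) (ZMod 2)) (hQ : Q.IsSymm)
    (f : (Fin r → ZMod 2) → (Fin n → ZMod 2)) (hf : ∀ z, f z = R.mulVec z + t)
    (ψ₀ : EuclideanSpace ℂ (Fin n → ZMod 2))
    (hψ₀ : ψ₀ = ((Real.sqrt (2 ^ r) : ℂ))⁻¹ •
      ∑ z : Fin r → ZMod 2,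
        (Complex.I ^ (2 * ∑ m, (c m).val * (f z m).val +
            ∑ m, ∑ m', (f z m).val * ((Q m m').val * (f z m').val))) •
          EuclideanSpace.single (f z) (1 : ℂ))
    (A : Matrix (Fin N) (Fin n) (ZMod 2)) :
    ∀ b : Fin N → ZMod 2,
      ∑ u ∈ Finset.univ.filter (fun u : Fin n → ZMod 2 => A.mulVec u = b),
        ‖⟪ψ₀, EuclideanSpace.single u 1⟫_ℂ‖ ^ 2 =
      if b ∈ Set.range (fun z : Fin r → ZMod 2 => A.mulVec (f z)) then
        ((2 : ℝ) ^ (A * R).rank)⁻¹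
      else 0 := by
  intro b
  -- injectivity of f
  have hRinj : Function.Injective R.mulVec := by
    have h1 := LinearMap.finrank_range_add_finrank_ker R.mulVecLin
    have h2 : Module.finrank (ZMod 2) (Fin r → ZMod 2) = r := by simp
    have hrk : Module.finrank (ZMod 2) (LinearMap.range R.mulVecLin) = r := hR
    have h3 : Module.finrank (ZMod 2) (LinearMap.ker R.mulVecLin) = 0 := by omega
    have h4 : LinearMap.ker R.mulVecLin = ⊥ :=
      Submodule.finrank_eq_zero.mp h3
    intro x y hxy
    exact (LinearMap.ker_eq_bot.mp h4) hxy
  have hfinj : Function.Injective f := by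
    intro x y hxy
    rw [hf, hf] at hxy
    exact hRinj (by simpa using hxy)
  -- the coefficient
  set α : (Fin r → ZMod 2) → ℂ := fun z =>
    (Complex.I ^ (2 * ∑ m, (c m).val * (f z m).val +
        ∑ m, ∑ m', (f z m).val * ((Q m m').val * (f z m').val))) with hα
  have hαnorm : ∀ z, ‖α z‖ = 1 := by intro z; simp [hα]
  -- pointwise norm
  have hnorm : ∀ u : Fin n → ZMod 2, ‖⟪ψ₀, EuclideanSpace.single u 1⟫_ℂ‖ ^ 2 =
      if u ∈ Set.range f then ((2:ℝ)^r)⁻¹ else 0 := by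
    intro u
    rw [EuclideanSpace.inner_single_right, one_mul, RCLike.norm_conj]
    have happ : ψ₀ u = ((Real.sqrt (2 ^ r) : ℂ))⁻¹ *
        ∑ z : Fin r → ZMod 2, (if u = f z then α z else 0) := by
      rw [hψ₀, PiLp.smul_apply, smul_eq_mul]
      congr 1
      rw [WithLp.ofLp_sum, Finset.sum_apply]
      refine Finset.sum_congr rfl fun z _ => ?_
      rw [PiLp.smul_apply, EuclideanSpace.single_apply, smul_eq_mul]
      simp [hα]
    by_cases hu : u ∈ Set.range f
    · obtain ⟨z₀, hz₀⟩ := hu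
      have hsum : ∑ z : Fin r → ZMod 2, (if u = f z then α z else 0) = α z₀ := by
        rw [Finset.sum_eq_single z₀]
        · simp [hz₀]
        · intro z _ hz
          have : u ≠ f z := by
            rw [← hz₀]; exact fun h => hz (hfinj h.symm)
          simp [this]
        · simp
      rw [happ, hsum]
      have h2r : (0:ℝ) ≤ 2 ^ r := by positivity
      have : ‖((Real.sqrt (2 ^ r) : ℂ))⁻¹ * α z₀‖ = (Real.sqrt (2^r))⁻¹ := by
        rw [norm_mul, hαnorm, mul_one, norm_inv, Complex.norm_real,
          Real.norm_eq_abs, abs_of_nonneg (Real.sqrt_nonneg _)]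
      rw [if_pos ⟨z₀, hz₀⟩, this]
      rw [← Real.sqrt_inv, Real.sq_sqrt (by positivity)]
    · have hsum : ∑ z : Fin r → ZMod 2, (if u = f z then α z else 0) = 0 := by
        apply Finset.sum_eq_zero
        intro z _
        have : u ≠ f z := fun h => hu ⟨z, h.symm⟩
        simp [this]
      rw [happ, hsum, mul_zero, norm_zero, if_neg hu]
      norm_num
  -- rewrite the sum
  simp_rw [hnorm]
  rw [← Finset.sum_filter, Finset.filter_filter, Finset.sum_const, nsmul_eq_mul]
  -- transfer to z-space
  have hcard : (Finset.univ.filter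
        (fun u : Fin n → ZMod 2 => A.mulVec u = b ∧ u ∈ Set.range f)).card
      = (Finset.univ.filter
        (fun z : Fin r → ZMod 2 => A.mulVec (f z) = b)).card := by
    symm
    apply Finset.card_bij (fun z _ => f z)
    · intro z hz
      simp only [Finset.mem_filter, Finset.mem_univ, true_and] at hz ⊢
      exact ⟨hz, ⟨z, rfl⟩⟩
    · intro z₁ _ z₂ _ h; exact hfinj h
    · intro u hu
      simp only [Finset.mem_filter, Finset.mem_univ, true_and] at hu
      obtain ⟨hAu, z, hz⟩ := hu
      exact ⟨z, by simp [hz, hAu], hz⟩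
  rw [hcard]
  set M := A * R with hM
  have hAf : ∀ z, A.mulVec (f z) = M.mulVec z + A.mulVec t := by
    intro z; rw [hf, Matrix.mulVec_add, Matrix.mulVec_mulVec]
  by_cases hb : b ∈ Set.range (fun z : Fin r → ZMod 2 => A.mulVec (f z))
  · obtain ⟨z₀, hz₀⟩ := hb
    have hz₀'' : A.mulVec (f z₀) = b := hz₀
    have hz₀' : M.mulVec z₀ = b - A.mulVec t := by
      rw [eq_sub_iff_add_eq, ← hAf]; exact hz₀''
    have hpred : (Finset.univ.filter (fun z : Fin r → ZMod 2 => A.mulVec (f z) = b))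
        = (Finset.univ.filter (fun z => M.mulVec z = b - A.mulVec t)) := by
      apply Finset.filter_congr
      intro z _
      rw [hAf z]
      constructor
      · intro h; rw [eq_sub_iff_add_eq]; exact h
      · intro h; rw [h, sub_add_cancel]
    rw [hpred, fiber_card M _ z₀ hz₀', if_pos ⟨z₀, hz₀⟩]
    have hd : M.rank ≤ r := le_trans M.rank_le_card_width (by simp)
    have : ((2:ℝ)^r) = 2 ^ M.rank * 2 ^ (r - M.rank) := by
      rw [← pow_add]; congr 1; omega
    push_cast
    rw [this]
    field_simp
  · rw [if_neg hb]
    have : (Finset.univ.filter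
        (fun z : Fin r → ZMod 2 => A.mulVec (f z) = b)) = ∅ := by
      rw [Finset.filter_eq_empty_iff]
      intro z _
      exact fun h => hb ⟨z, h⟩
    rw [this]
    simp
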